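/- Let n be a 3-fold Pfister form over k, C and D eight-dimensional composition algebras with form n, and h : C → D an algebra isomorphism. Then h ∈ O(n), and for each j ∈ GO⁺(n) with triality components (j₁, j₂) with respect to D, the pair (h⁻¹j₁h, h⁻¹j₂h) is a pair of triality components of h⁻¹jh with respect to C; consequently ρ_r^C([h⁻¹jh]) = [h⁻¹]ρ_r^D([j])[h] for r = 1, 2. -/

import Mathlib

open QuadraticMap Module

section Aux
variable {k V : Type*} [Field k] [AddCommGroup V] [Module k V] [FiniteDimensional k V]

set_option linter.unusedSectionVars false
set_option maxHeartbeats 1000000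

lemma aux_polar_mul_right (n : QuadraticForm k V) (mul : V →ₗ[k] V →ₗ[k] V)
    (hcomp : ∀ x y : V, n (mul x y) = n x * n y) (a x y : V) :
    polar n (mul a x) (mul a y) = n a * polar n x y := by
  have h1 : mul a x + mul a y = mul a (x + y) := (map_add (mul a) x y).symm
  simp only [QuadraticMap.polar, h1, hcomp]
  ring

lemma aux_polar_mul_left (n : QuadraticForm k V) (mul : V →ₗ[k] V →ₗ[k] V)
    (hcomp : ∀ x y : V, n (mul x y) = n x * n y) (a b x : V) :
    polar n (mul a x) (mul b x) = polar n a b * n x := by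
  have h1 : mul a x + mul b x = mul (a + b) x := by
    rw [map_add]; rfl
  simp only [QuadraticMap.polar, h1, hcomp]
  ring

lemma aux_T (n : QuadraticForm k V)
    (hnd : ∀ x : V, (∀ y : V, polar n x y = 0) → x = 0) (h : V ≃ₗ[k] V) :
    ∃ T : V →ₗ[k] V, Function.Surjective T ∧
      ∀ x y : V, polar n (T x) y = polar n (h x) (h y) := by
  have hinjB : Function.Injective (polarBilin n : V →ₗ[k] Module.Dual k V) := by
    intro u v huv
    have hz : ∀ z : V, polar n (u - v) z = 0 := by
      intro z
      have : polarBilin n (u - v) = 0 := by rw [_root_.map_sub, huv, sub_self]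
      calc polar n (u - v) z = polarBilin n (u - v) z := rfl
        _ = 0 := by rw [this]; rfl
    have := hnd _ hz
    exact sub_eq_zero.mp this
  have hfr : finrank k V = finrank k (Module.Dual k V) := (Subspace.dual_finrank_eq).symm
  let eB : V ≃ₗ[k] Module.Dual k V :=
    LinearMap.linearEquivOfInjective (polarBilin n : V →ₗ[k] Module.Dual k V) hinjB hfr
  let Φ : V →ₗ[k] Module.Dual k V :=
    ((polarBilin n).compl₁₂ h.toLinearMap h.toLinearMap : V →ₗ[k] V →ₗ[k] k)
  refine ⟨eB.symm.toLinearMap ∘ₗ Φ, ?_, ?_⟩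
  · have hTinj : Function.Injective (eB.symm.toLinearMap ∘ₗ Φ) := by
      have hΦinj : Function.Injective Φ := by
        intro u v huv
        have huv2 : h u = h v := by
          apply sub_eq_zero.mp
          apply hnd
          intro y
          have h1 : Φ u (h.symm y) = Φ v (h.symm y) := by rw [huv]
          simp only [Φ, LinearMap.compl₁₂_apply, LinearEquiv.coe_coe,
            LinearEquiv.apply_symm_apply] at h1
          rw [polar_sub_left]
          exact sub_eq_zero.mpr h1
        exact h.injective huv2
      exact eB.symm.injective.comp hΦinj
    exact LinearMap.injective_iff_surjective.mp hTinj
  · intro x y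
    have h1 : polarBilin n ((eB.symm.toLinearMap ∘ₗ Φ) x) = Φ x := by
      have h2 := eB.apply_symm_apply (Φ x)
      calc polarBilin n ((eB.symm.toLinearMap ∘ₗ Φ) x)
          = eB (eB.symm (Φ x)) := by rfl
        _ = Φ x := h2
    calc polar n ((eB.symm.toLinearMap ∘ₗ Φ) x) y
        = polarBilin n ((eB.symm.toLinearMap ∘ₗ Φ) x) y := rfl
      _ = Φ x y := by rw [h1]
      _ = polar n (h x) (h y) := by simp [Φ, LinearMap.compl₁₂_apply]

lemma comp_iso_isometry (hchar : (2 : k) ≠ 0)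
    (hdim : Module.finrank k V = 8)
    (n : QuadraticForm k V)
    (hnd : ∀ x : V, (∀ y : V, QuadraticMap.polar n x y = 0) → x = 0)
    (mulC mulD : V →ₗ[k] V →ₗ[k] V)
    (hcompC : ∀ x y : V, n (mulC x y) = n x * n y)
    (hcompD : ∀ x y : V, n (mulD x y) = n x * n y)
    (h : V ≃ₗ[k] V)
    (hhom : ∀ x y : V, h (mulC x y) = mulD (h x) (h y)) :
    ∀ x : V, n (h x) = n x := by
  classical
  have hpself : ∀ x : V, polar n x x = 2 * n x := by
    intro x
    rw [polar_self]
    push_cast [nsmul_eq_mul]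
    ring
  have hpolar_expand : ∀ u v : V, n (u + v) = n u + n v + polar n u v := by
    intro u v
    simp only [QuadraticMap.polar]
    ring
  -- anisotropic vector
  have hx0 : ∃ x₀ : V, n x₀ ≠ 0 := by
    by_contra hc
    push_neg at hc
    have hz : ∀ x : V, x = 0 := by
      intro x
      apply hnd
      intro y
      simp [QuadraticMap.polar, hc]
    have hsub : Subsingleton V := ⟨fun a b => (hz a).trans (hz b).symm⟩
    have h0 : Module.finrank k V = 0 := Module.finrank_zero_iff.mpr hsub
    rw [hdim] at h0
    exact absurd h0 (by norm_num)
  obtain ⟨x₀, hx₀⟩ := hx0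
  -- left multiplication injectivity (in the algebra element)
  have hLinj : ∀ w : V, (∀ v : V, mulC w v = 0) → w = 0 := by
    intro w hw
    apply hnd
    intro u
    have h1 := aux_polar_mul_left n mulC hcompC w u x₀
    rw [hw x₀, polar_zero_left] at h1
    exact (mul_eq_zero.mp h1.symm).resolve_right hx₀
  -- left multiplication by an anisotropic element is surjective
  have hLsurj : ∀ a : V, n a ≠ 0 → Function.Surjective (mulC a) := by
    intro a ha
    apply LinearMap.injective_iff_surjective.mp
    intro u v huv
    apply sub_eq_zero.mp
    apply hnd
    intro z
    have h1 := aux_polar_mul_right n mulC hcompC a (u - v) z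
    rw [_root_.map_sub, huv, sub_self, polar_zero_left] at h1
    rcases mul_eq_zero.mp h1.symm with h2 | h2
    · exact absurd h2 ha
    · exact h2
  obtain ⟨T, hTsurj, hTdef⟩ := aux_T n hnd h
  set lam : V → k := fun a => n (h a) * (n a)⁻¹ with hlamdef
  -- the fundamental commutation relation
  have hRel : ∀ a : V, n a ≠ 0 → ∀ x : V, T (mulC a x) = lam a • mulC a (T x) := by
    intro a ha x
    apply sub_eq_zero.mp
    apply hnd
    intro z
    obtain ⟨y, rfl⟩ := hLsurj a ha z
    rw [polar_sub_left, polar_smul_left]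
    have e1 : polar n (T (mulC a x)) (mulC a y) = n (h a) * polar n (T x) y := by
      rw [hTdef, hhom, hhom, aux_polar_mul_right n mulD hcompD, hTdef]
    have e2 : polar n (mulC a (T x)) (mulC a y) = n a * polar n (T x) y :=
      aux_polar_mul_right n mulC hcompC a (T x) y
    rw [e1, e2, smul_eq_mul]
    simp only [hlamdef]
    field_simp
    ring
  -- scaling invariance of lam
  have hlam_smul : ∀ (t : k), t ≠ 0 → ∀ a : V, lam (t • a) = lam a := by
    intro t ht a
    have h1 : n (h (t • a)) = t * t * n (h a) := by
      rw [_root_.map_smul, QuadraticMap.map_smul, smul_eq_mul]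
    have h2 : n (t • a) = t * t * n a := by
      rw [QuadraticMap.map_smul, smul_eq_mul]
    simp only [hlamdef]
    rw [h1, h2, mul_inv]
    by_cases ha : n a = 0
    · simp [ha]
    · rw [mul_inv]
      field_simp
  have hlam_neg : ∀ a : V, lam (-a) = lam a := by
    intro a
    have := hlam_smul (-1) (by norm_num) a
    simpa using this
  -- linking lemma for pairs with n (a+b) ≠ 0
  have hlink : ∀ a b : V, n a ≠ 0 → n b ≠ 0 → n (a + b) ≠ 0 → lam a = lam b := by
    intro a b ha hb hab
    by_cases hdep : ∃ t : k, b = t • a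
    · obtain ⟨t, rfl⟩ := hdep
      have ht : t ≠ 0 := by
        rintro rfl
        simp at hb
      exact (hlam_smul t ht a).symm
    · have key : ∀ v : V, (lam (a + b) - lam a) • mulC a v = (lam b - lam (a + b)) • mulC b v := by
        intro v
        obtain ⟨x, rfl⟩ := hTsurj v
        have e1 : T (mulC (a + b) x) = T (mulC a x) + T (mulC b x) := by
          rw [← _root_.map_add]
          congr 1
          rw [_root_.map_add]
          rfl
        rw [hRel (a + b) hab x, hRel a ha x, hRel b hb x] at e1
        have e2 : mulC (a + b) (T x) = mulC a (T x) + mulC b (T x) := by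
          rw [_root_.map_add]; rfl
        rw [e2, smul_add] at e1
        rw [sub_smul, sub_smul, sub_eq_sub_iff_add_eq_add, e1]
        abel
      have hz : (lam (a + b) - lam a) • a - (lam b - lam (a + b)) • b = 0 := by
        apply hLinj
        intro v
        rw [_root_.map_sub, LinearMap.sub_apply, _root_.map_smul, _root_.map_smul,
          LinearMap.smul_apply, LinearMap.smul_apply]
        exact sub_eq_zero.mpr (key v)
      have heq : (lam (a + b) - lam a) • a = (lam b - lam (a + b)) • b :=
        sub_eq_zero.mp hz
      have hβ : lam b - lam (a + b) = 0 := by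
        by_contra hβ
        refine hdep ⟨(lam b - lam (a + b))⁻¹ * (lam (a + b) - lam a), ?_⟩
        rw [mul_smul, heq, smul_smul, inv_mul_cancel₀ hβ, one_smul]
      have hα : lam (a + b) - lam a = 0 := by
        rw [hβ, zero_smul] at heq
        have ha0 : a ≠ 0 := by
          rintro rfl
          simp at ha
        rcases smul_eq_zero.mp heq with h1 | h1
        · exact h1
        · exact absurd h1 ha0
      have h1 : lam (a + b) = lam a := sub_eq_zero.mp hα
      have h2 : lam b = lam (a + b) := sub_eq_zero.mp hβ
      rw [h2, h1]
  -- linking with a sign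
  have hlink2 : ∀ a b : V, n a ≠ 0 → n b ≠ 0 →
      (n (a + b) ≠ 0 ∨ n (a - b) ≠ 0) → lam a = lam b := by
    intro a b ha hb hor
    rcases hor with h1 | h1
    · exact hlink a b ha hb h1
    · have hnb : n (-b) ≠ 0 := by rwa [QuadraticMap.map_neg]
      have := hlink a (-b) ha hnb (by rwa [← sub_eq_add_neg])
      rw [this, hlam_neg]
  -- full constancy of lam on anisotropic vectors
  have hconst : ∀ a b : V, n a ≠ 0 → n b ≠ 0 → lam a = lam b := by
    intro a b ha hb
    by_cases hgood : n (a + b) ≠ 0 ∨ n (a - b) ≠ 0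
    · exact hlink2 a b ha hb hgood
    push_neg at hgood
    obtain ⟨hp, hm⟩ := hgood
    -- bad pair: polar n a b = 0 and n b = - n a
    have hb_eq : n a + n b = 0 ∧ polar n a b = 0 := by
      have e1 : n a + n b + polar n a b = 0 := by rw [← hpolar_expand]; exact hp
      have e2 : n a + n b - polar n a b = 0 := by
        have e3 : n (a - b) = n a + n b - polar n a b := by
          have := hpolar_expand a (-b)
          rw [QuadraticMap.map_neg, polar_neg_right] at this
          rw [← sub_eq_add_neg] at this
          rw [this]; ring
        rw [← e3]; exact hm
      constructor
      · have : (2 : k) * (n a + n b) = 0 := by linear_combination e1 + e2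
        rcases mul_eq_zero.mp this with h3 | h3
        · exact absurd h3 hchar
        · exact h3
      · have h5 : (2 : k) * polar n a b = 0 := by linear_combination e1 - e2
        rcases mul_eq_zero.mp h5 with h6 | h6
        · exact absurd h6 hchar
        · exact h6
    obtain ⟨hsum0, hab0⟩ := hb_eq
    have hnb_eq : n b = - n a := by linear_combination hsum0
    -- find an anisotropic vector orthogonal to both a and b
    have hd : ∃ d : V, polar n a d = 0 ∧ polar n b d = 0 ∧ n d ≠ 0 := by
      by_contra hcon
      push_neg at hcon
      have h2a : (2 : k) * n a ≠ 0 := mul_ne_zero hchar ha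
      have h2b : (2 : k) * n b ≠ 0 := mul_ne_zero hchar hb
      set pr : V → V := fun v =>
        v - (polar n a v / (2 * n a)) • a - (polar n b v / (2 * n b)) • b with hprdef
      have hpra : ∀ v : V, polar n a (pr v) = 0 := by
        intro v
        simp only [hprdef]
        rw [polar_sub_right, polar_sub_right, polar_smul_right, polar_smul_right,
          hpself, hab0, smul_eq_mul, smul_eq_mul]
        field_simp
        ring
      have hprb : ∀ v : V, polar n b (pr v) = 0 := by
        intro v
        simp only [hprdef]
        rw [polar_sub_right, polar_sub_right, polar_smul_right, polar_smul_right,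
          hpself, polar_comm (⇑n) b a, hab0, smul_eq_mul, smul_eq_mul]
        field_simp
        ring
      have hWz : ∀ u v : V, polar n a u = 0 → polar n b u = 0 →
          polar n a v = 0 → polar n b v = 0 → polar n u v = 0 := by
        intro u v hau hbu hav hbv
        have h1 : n (u + v) = 0 := hcon _
          (by rw [polar_add_right, hau, hav, add_zero])
          (by rw [polar_add_right, hbu, hbv, add_zero])
        have h2 : n u = 0 := hcon _ hau hbu
        have h3 : n v = 0 := hcon _ hav hbv
        have h4 := hpolar_expand u v
        rw [h1, h2, h3] at h4
        linear_combination -h4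
      have hpr0 : ∀ v : V, pr v = 0 := by
        intro v
        apply hnd
        intro u
        have hdecomp : u = pr u + (polar n a u / (2 * n a)) • a
            + (polar n b u / (2 * n b)) • b := by
          simp only [hprdef]
          abel
        have t1 : polar n (pr v) a = 0 := by rw [polar_comm]; exact hpra v
        have t2 : polar n (pr v) b = 0 := by rw [polar_comm]; exact hprb v
        rw [hdecomp, polar_add_right, polar_add_right, polar_smul_right, polar_smul_right,
          hWz _ _ (hpra v) (hprb v) (hpra u) (hprb u), t1, t2, smul_eq_mul, smul_eq_mul]
        ring
      have hspan : ∀ v : V, v ∈ Submodule.span k ({a, b} : Set V) := by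
        intro v
        have h1 := hpr0 v
        simp only [hprdef] at h1
        rw [sub_sub] at h1
        have h2 := sub_eq_zero.mp h1
        rw [h2]
        exact Submodule.add_mem _
          (Submodule.smul_mem _ _ (Submodule.subset_span (by simp : a ∈ ({a, b} : Set V))))
          (Submodule.smul_mem _ _ (Submodule.subset_span (by simp : b ∈ ({a, b} : Set V))))
      have htop : Submodule.span k ({a, b} : Set V) = ⊤ :=
        eq_top_iff.mpr fun v _ => hspan v
      have hle : Module.finrank k V ≤ 2 := by
        have h1 : Module.finrank k ↥(Submodule.span k ({a, b} : Set V)) ≤ 2 := by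
          have h2 := finrank_span_le_card (R := k) ({a, b} : Set V)
          refine h2.trans ?_
          have h3 : ({a, b} : Set V).toFinset ⊆ ({a, b} : Finset V) := by
            intro z hz
            simpa using Set.mem_toFinset.mp hz
          refine (Finset.card_le_card h3).trans ?_
          exact (Finset.card_insert_le _ _).trans (by simp)
        rw [htop, finrank_top] at h1
        exact h1
      rw [hdim] at hle
      omega
    obtain ⟨d, had, hbd, hd0⟩ := hd
    by_cases h2 : n d = - n a
    · -- use e = b + d
      have hne : n (b + d) ≠ 0 := by
        rw [hpolar_expand, hnb_eq, h2, hbd]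
        intro hcc
        apply ha
        have : (2:k) * n a = 0 := by linear_combination -hcc
        rcases mul_eq_zero.mp this with h3 | h3
        · exact absurd h3 hchar
        · exact h3
      have l1 : lam a = lam (b + d) := by
        apply hlink2 a (b + d) ha hne
        left
        have : n (a + (b + d)) = - n a := by
          rw [hpolar_expand, hpolar_expand, polar_add_right, hab0, had, hnb_eq, h2, hbd]
          ring
        rw [this]
        simpa using ha
      have l2 : lam b = lam (b + d) := by
        apply hlink2 b (b + d) hb hne
        right
        have : n (b - (b + d)) = n d := by
          have : b - (b + d) = -d := by abel
          rw [this, QuadraticMap.map_neg]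
        rw [this]
        exact hd0
      rw [l1, l2]
    · by_cases h3 : n d = n a
      · -- use e = a + d
        have hne : n (a + d) ≠ 0 := by
          rw [hpolar_expand, h3, had]
          intro hcc
          apply ha
          have : (2:k) * n a = 0 := by linear_combination hcc
          rcases mul_eq_zero.mp this with h4 | h4
          · exact absurd h4 hchar
          · exact h4
        have l1 : lam a = lam (a + d) := by
          apply hlink2 a (a + d) ha hne
          right
          have : n (a - (a + d)) = n d := by
            have h5 : a - (a + d) = -d := by abel
            rw [h5, QuadraticMap.map_neg]
          rw [this]
          exact hd0
        have l2 : lam b = lam (a + d) := by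
          apply hlink2 b (a + d) hb hne
          left
          have : n (b + (a + d)) = n a := by
            rw [hpolar_expand, hpolar_expand, polar_add_right, hnb_eq, h3, had,
              polar_comm (⇑n) b a, hab0, hbd]
            ring
          rw [this]
          exact ha
        rw [l1, l2]
      · -- use d itself
        have l1 : lam a = lam d := by
          apply hlink2 a d ha hd0
          left
          rw [hpolar_expand, had]
          intro hcc
          apply h2
          linear_combination hcc
        have l2 : lam b = lam d := by
          apply hlink2 b d hb hd0
          left
          rw [hpolar_expand, hnb_eq, hbd]
          intro hcc
          apply h3
          linear_combination hcc
        rw [l1, l2]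
  -- the constant
  set c : k := lam x₀ with hcdef
  -- the commutation relation for all a
  have hP : ∀ a x : V, T (mulC a x) = c • mulC a (T x) := by
    intro a x
    by_cases ha : n a = 0
    · have hor : n (a + x₀) ≠ 0 ∨ n (a - x₀) ≠ 0 := by
        by_contra hcc
        push_neg at hcc
        obtain ⟨h1, h2⟩ := hcc
        have e1 : n a + n x₀ + polar n a x₀ = 0 := by rw [← hpolar_expand]; exact h1
        have e2 : n a + n x₀ - polar n a x₀ = 0 := by
          have e3 : n (a - x₀) = n a + n x₀ - polar n a x₀ := by
            have := hpolar_expand a (-x₀)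
            rw [QuadraticMap.map_neg, polar_neg_right] at this
            rw [← sub_eq_add_neg] at this
            rw [this]; ring
          rw [← e3]; exact h2
        have : (2 : k) * n x₀ = 0 := by linear_combination e1 + e2 - 2 * ha
        rcases mul_eq_zero.mp this with h3 | h3
        · exact absurd h3 hchar
        · exact absurd h3 hx₀
      rcases hor with h1 | h1
      · have e1 : T (mulC (a + x₀) x) = c • mulC (a + x₀) (T x) := by
          rw [hRel (a + x₀) h1 x, hconst (a + x₀) x₀ h1 hx₀]
        have e2 : T (mulC x₀ x) = c • mulC x₀ (T x) := by
          rw [hRel x₀ hx₀ x]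
        have e3 : T (mulC a x) = T (mulC (a + x₀) x) - T (mulC x₀ x) := by
          rw [← _root_.map_sub]
          congr 1
          rw [_root_.map_add]
          simp [LinearMap.add_apply]
        rw [e3, e1, e2]
        have e4 : mulC (a + x₀) (T x) = mulC a (T x) + mulC x₀ (T x) := by
          rw [_root_.map_add]; rfl
        rw [e4, smul_add]
        abel
      · have h1' : n (a - x₀) ≠ 0 := h1
        have e1 : T (mulC (a - x₀) x) = c • mulC (a - x₀) (T x) := by
          rw [hRel (a - x₀) h1' x, hconst (a - x₀) x₀ h1' hx₀]
        have e2 : T (mulC x₀ x) = c • mulC x₀ (T x) := by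
          rw [hRel x₀ hx₀ x]
        have e3 : T (mulC a x) = T (mulC (a - x₀) x) + T (mulC x₀ x) := by
          rw [← _root_.map_add]
          congr 1
          rw [_root_.map_sub]
          simp [LinearMap.sub_apply]
        rw [e3, e1, e2]
        have e4 : mulC (a - x₀) (T x) = mulC a (T x) - mulC x₀ (T x) := by
          rw [_root_.map_sub]; rfl
        rw [e4, smul_sub]
        abel
    · rw [hRel a ha x, hconst a x₀ ha hx₀]
  -- conclude : n (h a) = c * n a for all a
  have hck : ∀ a : V, n (h a) = c * n a := by
    intro a
    set x : V := h.symm x₀ with hxdef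
    have hpx : polar n (h x) (h x) = 2 * n x₀ := by
      rw [hxdef, LinearEquiv.apply_symm_apply, hpself]
    have hpx0 : polar n (h x) (h x) ≠ 0 := by
      rw [hpx]
      exact mul_ne_zero hchar hx₀
    have e1 : polar n (h (mulC a x)) (h (mulC a x)) = n (h a) * polar n (h x) (h x) := by
      rw [hhom, aux_polar_mul_right n mulD hcompD]
    have e2 : polar n (h (mulC a x)) (h (mulC a x)) = c * (n a * polar n (h x) (h x)) := by
      rw [← hTdef, hP, polar_smul_left, smul_eq_mul]
      rw [aux_polar_mul_right n mulC hcompC, hTdef]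
    have e3 : (n (h a) - c * n a) * polar n (h x) (h x) = 0 := by
      linear_combination e2 - e1
    rcases mul_eq_zero.mp e3 with h4 | h4
    · linear_combination h4
    · exact absurd h4 hpx0
  -- c ≠ 0
  have hc0 : c ≠ 0 := by
    intro h0
    have := hck (h.symm x₀)
    rw [h0, zero_mul, LinearEquiv.apply_symm_apply] at this
    exact hx₀ this
  -- c = 1
  have hc1 : c = 1 := by
    have e1 : n (h (mulC x₀ x₀)) = c * n (mulC x₀ x₀) := hck _
    rw [hhom, hcompD, hck x₀, hcompC] at e1
    have e2 : c * (n x₀ * n x₀) * (c - 1) = 0 := by linear_combination e1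
    rcases mul_eq_zero.mp e2 with h4 | h4
    · rcases mul_eq_zero.mp h4 with h5 | h5
      · exact absurd h5 hc0
      · exact absurd h5 (mul_ne_zero hx₀ hx₀)
    · exact sub_eq_zero.mp h4
  intro a
  rw [hck a, hc1, one_mul]

end Aux



/-- If `h : C → D` is an isomorphism of eight-dimensional composition algebras
with the same form `n`, then `h ∈ O(n)`, and whenever `(j₁, j₂)` are triality
components of `j` with respect to `D`, the pair `(h⁻¹j₁h, h⁻¹j₂h)` consists of
triality components of `h⁻¹jh` with respect to `C`; consequently
`ρ_r^C([h⁻¹jh]) = [h⁻¹]ρ_r^D([j])[h]`. -/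
theorem stmt14 {k V : Type*} [Field k] (hchar : (2 : k) ≠ 0)
    [AddCommGroup V] [Module k V] [FiniteDimensional k V]
    (hdim : Module.finrank k V = 8)
    (n : QuadraticForm k V)
    (hnd : ∀ x : V, (∀ y : V, QuadraticMap.polar n x y = 0) → x = 0)
    (mulC mulD : V →ₗ[k] V →ₗ[k] V)
    (hcompC : ∀ x y : V, n (mulC x y) = n x * n y)
    (hcompD : ∀ x y : V, n (mulD x y) = n x * n y)
    (h : V ≃ₗ[k] V)
    (hhom : ∀ x y : V, h (mulC x y) = mulD (h x) (h y)) :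
    (∀ x : V, n (h x) = n x) ∧
    (∀ j j₁ j₂ : V ≃ₗ[k] V,
      (∀ x y : V, j (mulD x y) = mulD (j₁ x) (j₂ y)) →
      ∀ x y : V, h.symm (j (h (mulC x y))) =
        mulC (h.symm (j₁ (h x))) (h.symm (j₂ (h y)))) := by
  constructor
  · exact comp_iso_isometry hchar hdim n hnd mulC mulD hcompC hcompD h hhom
  · intro j j₁ j₂ hj x y
    have hsym : ∀ u v : V, h.symm (mulD u v) = mulC (h.symm u) (h.symm v) := by
      intro u v
      apply h.injective
      rw [LinearEquiv.apply_symm_apply, hhom, LinearEquiv.apply_symm_apply,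
        LinearEquiv.apply_symm_apply]
    rw [hhom, hj, hsym]
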